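/- Let (M,P,g) be a Riemannian almost product manifold with F(x,y,z) = g((∇ₓP)y,z). Then the cyclic sum 𝔖_{x,y,z} F(x,y,z) = 0 holds for all x,y,z if and only if the cyclic sum 𝔖_{x,y,z} F(Px,y,z) = 0 holds for all x,y,z. -/
import Mathlib


/-- Let `(M,P,g)` be a Riemannian almost product manifold (modeled algebraically
with metric `g`, structure `P`, Levi-Civita connection `nabla` and derivation
`D`), and `F(x,y,z) = g((∇ₓP)y,z)`.  Then the cyclic sum
`𝔖_{x,y,z} F(x,y,z) = 0` holds for all `x,y,z` if and only if
`𝔖_{x,y,z} F(Px,y,z) = 0` holds for all `x,y,z`. -/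
theorem cyclic_sum_iff_cyclic_sum_P
    {A X : Type*} [CommRing A] [AddCommGroup X] [Module A X]
    (g : X →ₗ[A] X →ₗ[A] A) (P : X →ₗ[A] X)
    (nabla : X → X → X) (D : X → A → A)
    (hgsymm : ∀ x y : X, g x y = g y x)
    (hP2 : ∀ x : X, P (P x) = x)
    (hPg : ∀ x y : X, g (P x) (P y) = g x y)
    (hcompat : ∀ x y z : X, D x (g y z) = g (nabla x y) z + g y (nabla x z)) :
    let nablaP : X → X → X := fun x y => nabla x (P y) - P (nabla x y)
    let F : X → X → X → A := fun x y z => g (nablaP x y) z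
    (∀ x y z : X, F x y z + F y z x + F z x y = 0) ↔
    (∀ x y z : X, F (P x) y z + F (P y) z x + F (P z) x y = 0) := by
  intro nablaP F
  have hPg' : ∀ a z : X, g (P a) z = g a (P z) := by
    intro a z
    have := hPg a (P z)
    rwa [hP2] at this
  have key : ∀ x y z : X, F x (P y) (P z) = - F x y z := by
    intro x y z
    show g (nabla x (P (P y)) - P (nabla x (P y))) (P z)
        = - g (nabla x (P y) - P (nabla x y)) z
    rw [hP2, map_sub, map_sub, LinearMap.sub_apply, LinearMap.sub_apply,
      hPg (nabla x (P y)) z, ← hPg' (nabla x y) z]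
    ring
  constructor
  · intro h x y z
    have h2 := h (P x) (P y) (P z)
    rw [key, key, key] at h2
    linear_combination -h2
  · intro h x y z
    have h2 := h (P x) (P y) (P z)
    simp only [hP2] at h2
    rw [key, key, key] at h2
    linear_combination -h2
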